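/- Let ⟨e_ξ : ξ < ω₁⟩ be a nonstationarily 2-entangled sequence with range E. Then E is not reversible; that is, there is no order isomorphism between E and E* = {−x : x ∈ E}. -/

import Mathlib

/-- The first uncountable ordinal. -/
noncomputable def omega1 : Ordinal := (Cardinal.aleph 1).ord

/-- `C` is a club in `ω₁`. -/
def IsClubIn (C : Set Ordinal) : Prop :=
  C ⊆ Set.Iio omega1 ∧
  (∀ s : Set Ordinal, s ⊆ C → s.Nonempty → sSup s < omega1 → sSup s ∈ C) ∧
  (∀ a < omega1, ∃ b ∈ C, a ≤ b)

/-- `S` is stationary in `ω₁`. -/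
def IsStationaryIn (S : Set Ordinal) : Prop :=
  S ⊆ Set.Iio omega1 ∧ ∀ C : Set Ordinal, IsClubIn C → (S ∩ C).Nonempty

/-- `A ⊆ ℝ` is `ℵ₁`-dense: it has cardinality `ℵ₁`, no endpoints, and between any
two distinct elements of `A` there are `ℵ₁`-many elements of `A`. -/
def Aleph1Dense (A : Set ℝ) : Prop :=
  Cardinal.mk A = Cardinal.aleph 1 ∧
  (∀ x ∈ A, (∃ y ∈ A, y < x) ∧ (∃ y ∈ A, x < y)) ∧
  ∀ x ∈ A, ∀ y ∈ A, x < y → Cardinal.mk ↥(A ∩ Set.Ioo x y) = Cardinal.aleph 1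

/-- `e : ω₁ → ℝ` is a nonstationarily `2`-entangled sequence: `e` is injective on
`ω₁`, its range `E` is `ℵ₁`-dense, and for every injective monotone partial
function `f : E ⇀ E` (with domain `D`) without fixed points, the set
`{ξ < ω₁ : e ξ ∈ D}` is nonstationary. -/
def NonstatEntangled (e : Ordinal → ℝ) : Prop :=
  Set.InjOn e (Set.Iio omega1) ∧
  Aleph1Dense (e '' Set.Iio omega1) ∧
  ∀ (D : Set ℝ) (f : ℝ → ℝ),
    D ⊆ e '' Set.Iio omega1 → (∀ x ∈ D, f x ∈ e '' Set.Iio omega1) →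
    Set.InjOn f D → (MonotoneOn f D ∨ AntitoneOn f D) →
    (∀ x ∈ D, f x ≠ x) →
    ¬ IsStationaryIn {ξ : Ordinal | ξ < omega1 ∧ e ξ ∈ D}

/-- The range `E` of a nonstationarily `2`-entangled sequence is not reversible:
there is no order isomorphism between `E` and `E* = {-x : x ∈ E}`. -/
theorem nonstat_entangled_not_reversible (e : Ordinal → ℝ)
    (h : NonstatEntangled e) :
    ¬ ∃ g : ℝ → ℝ,
      Set.BijOn g (e '' Set.Iio omega1) ((fun x : ℝ => -x) '' (e '' Set.Iio omega1)) ∧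
      ∀ x ∈ e '' Set.Iio omega1, ∀ y ∈ e '' Set.Iio omega1, x < y → g x < g y := by

  rintro ⟨g, ⟨hmaps, hinj, -⟩, hmono⟩
  set E := e '' Set.Iio omega1 with hE
  have hlim : Order.IsSuccLimit omega1 := Cardinal.isSuccLimit_ord (Cardinal.aleph0_le_aleph 1)
  -- h x = -g x maps E into E
  have hmapE : ∀ x ∈ E, -g x ∈ E := by
    intro x hx
    obtain ⟨y, hy, hyx⟩ := hmaps hx
    simp only at hyx
    rw [← hyx, neg_neg]; exact hy
  -- at most one fixed point
  have hfix : ∀ x ∈ E, ∀ y ∈ E, -g x = x → -g y = y → x = y := by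
    intro x hx y hy hfx hfy
    rcases lt_trichotomy x y with hxy | hxy | hxy
    · have := hmono x hx y hy hxy
      have : -g y < -g x := by linarith
      rw [hfx, hfy] at this; exact absurd hxy (not_lt.2 this.le)
    · exact hxy
    · have := hmono y hy x hx hxy
      have : -g x < -g y := by linarith
      rw [hfx, hfy] at this; exact absurd hxy (not_lt.2 this.le)
  set D : Set ℝ := {x | x ∈ E ∧ -g x ≠ x} with hD
  have hDE : D ⊆ E := fun x hx => hx.1
  have key := h.2.2 D (fun x => -g x) hDE (fun x hx => hmapE x (hDE hx))
    (fun x hx y hy hxy => hinj (hDE hx) (hDE hy) (neg_injective hxy))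
    (Or.inr (by
      intro x hx y hy hxy
      rcases eq_or_lt_of_le hxy with rfl | hlt
      · exact le_rfl
      · exact (neg_lt_neg (hmono x (hDE hx) y (hDE hy) hlt)).le))
    (fun x hx => hx.2)
  apply key
  constructor
  · intro ξ hξ; exact hξ.1
  · rintro C ⟨hCsub, -, hCunb⟩
    obtain ⟨b₁, hb₁C, -⟩ := hCunb 0 hlim.pos
    have hb₁ : b₁ < omega1 := hCsub hb₁C
    obtain ⟨b₂, hb₂C, hle⟩ := hCunb (Order.succ b₁) (hlim.succ_lt hb₁)
    have hb₂ : b₂ < omega1 := hCsub hb₂C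
    have hne : b₁ ≠ b₂ := fun hEq => absurd (hEq ▸ Order.succ_le_iff.mp hle) (lt_irrefl _)
    have hEne : e b₁ ≠ e b₂ := fun hEq => hne (h.1 hb₁ hb₂ hEq)
    by_cases hc : -g (e b₁) = e b₁
    · refine ⟨b₂, ⟨hb₂, ⟨b₂, hb₂, rfl⟩, ?_⟩, hb₂C⟩
      intro hc2
      exact hEne (hfix _ ⟨b₁, hb₁, rfl⟩ _ ⟨b₂, hb₂, rfl⟩ hc hc2)
    · exact ⟨b₁, ⟨hb₁, ⟨b₁, hb₁, rfl⟩, hc⟩, hb₁C⟩
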